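/- For every ε > 0 there exists a finite point set S in general position such that every connected plane straight-line graph on S (in particular every plane spanning tree) has some vertex whose maximum incident angle is at most 5π/3 + ε. -/

import Mathlib

open scoped Classical
open EuclideanGeometry

noncomputable section

abbrev Pt := EuclideanSpace ℝ (Fin 2)

/-- No three points of `S` are collinear. -/
def GenPos (S : Finset Pt) : Prop :=
  ∀ p ∈ S, ∀ q ∈ S, ∀ r ∈ S, p ≠ q → p ≠ r → q ≠ r →
    ¬ Collinear ℝ ({p, q, r} : Set Pt)

/-- A plane straight-line graph on the finite point set `S`: vertices are points of `S`,
edges are recorded as ordered pairs closed under swapping, and two edges that are not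
the same unordered pair may only meet at common endpoints. -/
structure PSLG (S : Finset Pt) where
  E : Finset (Pt × Pt)
  symm : ∀ e ∈ E, (e.2, e.1) ∈ E
  endpts : ∀ e ∈ E, e.1 ∈ S ∧ e.2 ∈ S
  ne : ∀ e ∈ E, e.1 ≠ e.2
  noncross : ∀ e ∈ E, ∀ f ∈ E, e ≠ f → e ≠ (f.2, f.1) →
    ∀ x, x ∈ segment ℝ e.1 e.2 → x ∈ segment ℝ f.1 f.2 →
      (x = e.1 ∨ x = e.2) ∧ (x = f.1 ∨ x = f.2)

/-- The degree of the point `p` in `G`. -/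
def PSLG.deg {S : Finset Pt} (G : PSLG S) (p : Pt) : ℕ :=
  (G.E.filter fun e => e.1 = p).card

/-- The point `p` has an incident angle of size at least `φ` in `G`: all edge directions
at `p` fit in a closed cone of half-angle `π - φ / 2` (for `p` of degree ≤ 1 the maximum
incident angle is `2π`, and this condition holds trivially). -/
def VertexOpen {S : Finset Pt} (G : PSLG S) (p : Pt) (φ : ℝ) : Prop :=
  ∃ d : Pt, d ≠ 0 ∧ ∀ q : Pt, (p, q) ∈ G.E →
    InnerProductGeometry.angle d (q - p) ≤ Real.pi - φ / 2

/-- `G` is `φ`-open: every vertex has an incident angle of size at least `φ`. -/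
def PSLG.IsPhiOpen {S : Finset Pt} (G : PSLG S) (φ : ℝ) : Prop :=
  ∀ p ∈ S, VertexOpen G p φ

/-- `G` is connected on `S`. -/
def PSLG.Connected {S : Finset Pt} (G : PSLG S) : Prop :=
  ∀ p ∈ S, ∀ q ∈ S, Relation.ReflTransGen (fun a b => (a, b) ∈ G.E) p q

/-- `G` is a spanning tree of `S`: connected and with the minimum possible number of
edges (each undirected edge is recorded twice). -/
def PSLG.IsSpanningTree {S : Finset Pt} (G : PSLG S) : Prop :=
  G.Connected ∧ G.E.card = 2 * (S.card - 1)

/-- `G` is a (non-crossing Hamiltonian) spanning path of `S`: a spanning tree of maximum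
vertex degree at most two. -/
def PSLG.IsSpanningPath {S : Finset Pt} (G : PSLG S) : Prop :=
  G.IsSpanningTree ∧ ∀ p ∈ S, G.deg p ≤ 2

/-- `S` is in convex position. -/
def ConvexPos (S : Finset Pt) : Prop :=
  ∀ p ∈ S, p ∉ convexHull ℝ (↑(S.erase p) : Set Pt)

/-- `G` is a triangulation of `S`: a maximal plane straight-line graph, i.e. any further
edge between points of `S` would cross the existing graph. -/
def PSLG.IsTriangulation {S : Finset Pt} (G : PSLG S) : Prop :=
  ∀ p ∈ S, ∀ q ∈ S, p ≠ q → (p, q) ∉ G.E →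
    ∃ e ∈ G.E, ∃ x, x ∈ segment ℝ p q ∧ x ∈ segment ℝ e.1 e.2 ∧
      ¬((x = p ∨ x = q) ∧ (x = e.1 ∨ x = e.2))

end

noncomputable section AuxProof

open Real
open InnerProductGeometry (angle cos_angle angle_nonneg angle_smul_left_of_pos)

lemma arith_aux {a b nu nv : ℝ} (ha : √3/2 < a) (hb : √3/2 < b)
    (hnu : nu^2 = 1 - a^2) (hnv : nv^2 = 1 - b^2) (hnu0 : 0 ≤ nu) (hnv0 : 0 ≤ nv)
    (hcs : |1/2 - a*b| ≤ nu * nv) : False := by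
  have h3 : Real.sqrt 3 ^ 2 = 3 := Real.sq_sqrt (by norm_num)
  have h3pos : (0:ℝ) < √3 := Real.sqrt_pos.mpr (by norm_num)
  have ha2 : 3/4 < a^2 := by nlinarith
  have hb2 : 3/4 < b^2 := by nlinarith
  have hnu2 : nu < 1/2 := by nlinarith
  have hnv2 : nv < 1/2 := by nlinarith
  have hab : 3/4 < a*b := by nlinarith
  have habs : 1/4 < |1/2 - a*b| := by
    rw [abs_sub_comm, abs_of_nonneg (by nlinarith)]
    nlinarith
  nlinarith

lemma key_angle {d u v : Pt} (hd : d ≠ 0) (hu : ‖u‖ = 1) (hv : ‖v‖ = 1)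
    (huv : (inner ℝ u v : ℝ) = 1/2)
    (h1 : InnerProductGeometry.angle d u < π/6) (h2 : InnerProductGeometry.angle d v < π/6) : False := by
  obtain ⟨e, he⟩ : ∃ e : Pt, e = ‖d‖⁻¹ • d := ⟨_, rfl⟩
  have hdn : (0:ℝ) < ‖d‖ := norm_pos_iff.mpr hd
  have hen : ‖e‖ = 1 := by
    rw [he, norm_smul, norm_inv, norm_norm, inv_mul_cancel₀ hdn.ne']
  have hae : InnerProductGeometry.angle e u = InnerProductGeometry.angle d u := by
    rw [he]; exact InnerProductGeometry.angle_smul_left_of_pos d u (inv_pos.mpr hdn)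
  have hbe : InnerProductGeometry.angle e v = InnerProductGeometry.angle d v := by
    rw [he]; exact InnerProductGeometry.angle_smul_left_of_pos d v (inv_pos.mpr hdn)
  obtain ⟨a, ha⟩ : ∃ a : ℝ, a = inner ℝ e u := ⟨_, rfl⟩
  obtain ⟨b, hb⟩ : ∃ b : ℝ, b = inner ℝ e v := ⟨_, rfl⟩
  have hcosu : Real.cos (InnerProductGeometry.angle e u) = a := by
    rw [cos_angle, hen, hu, ha]; simp
  have hcosv : Real.cos (InnerProductGeometry.angle e v) = b := by
    rw [cos_angle, hen, hv, hb]; simp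
  have hπ6' : π/6 ≤ π := by linarith [Real.pi_pos.le]
  have hagt : √3/2 < a := by
    rw [← Real.cos_pi_div_six, ← hcosu, hae]
    exact Real.cos_lt_cos_of_nonneg_of_le_pi (angle_nonneg d u) hπ6' h1
  have hbgt : √3/2 < b := by
    rw [← Real.cos_pi_div_six, ← hcosv, hbe]
    exact Real.cos_lt_cos_of_nonneg_of_le_pi (angle_nonneg d v) hπ6' h2
  obtain ⟨u', hu'⟩ : ∃ u' : Pt, u' = u - a • e := ⟨_, rfl⟩
  obtain ⟨v', hv'⟩ : ∃ v' : Pt, v' = v - b • e := ⟨_, rfl⟩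
  have hee : (inner ℝ e e : ℝ) = 1 := by
    rw [real_inner_self_eq_norm_sq, hen]; norm_num
  have hnu' : ‖u'‖^2 = 1 - a^2 := by
    rw [← real_inner_self_eq_norm_sq, hu']
    simp only [inner_sub_left, inner_sub_right, real_inner_smul_left, real_inner_smul_right, hee]
    rw [real_inner_self_eq_norm_sq, hu, real_inner_comm e u, ← ha]
    ring
  have hnv' : ‖v'‖^2 = 1 - b^2 := by
    rw [← real_inner_self_eq_norm_sq, hv']
    simp only [inner_sub_left, inner_sub_right, real_inner_smul_left, real_inner_smul_right, hee]
    rw [real_inner_self_eq_norm_sq, hv, real_inner_comm e v, ← hb]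
    ring
  have hin' : (inner ℝ u' v' : ℝ) = 1/2 - a * b := by
    rw [hu', hv']
    simp only [inner_sub_left, inner_sub_right, real_inner_smul_left, real_inner_smul_right, hee]
    rw [huv, real_inner_comm e u, ← ha, ← hb]
    ring
  have hcs : |(inner ℝ u' v' : ℝ)| ≤ ‖u'‖ * ‖v'‖ := abs_real_inner_le_norm u' v'
  rw [hin'] at hcs
  exact arith_aux hagt hbgt hnu' hnv' (norm_nonneg u') (norm_nonneg v') hcs

def pt (x y : ℝ) : Pt := (WithLp.equiv 2 (Fin 2 → ℝ)).symm ![x, y]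

lemma pt_apply0 (x y : ℝ) : (pt x y) 0 = x := rfl
lemma pt_apply1 (x y : ℝ) : (pt x y) 1 = y := rfl
lemma inner_pt (x y z w : ℝ) : (inner ℝ (pt x y) (pt z w) : ℝ) = x*z + y*w := by
  simp [pt, PiLp.inner_apply, Fin.sum_univ_two, RCLike.inner_apply]; ring
lemma pt_sub (x y z w : ℝ) : pt x y - pt z w = pt (x - z) (y - w) := by
  ext i; fin_cases i <;> simp [pt]
lemma pt_norm (x y : ℝ) (h : x^2 + y^2 = 1) : ‖pt x y‖ = 1 := by
  rw [EuclideanSpace.norm_eq]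
  simp only [pt, Fin.sum_univ_two, WithLp.equiv_symm_apply, PiLp.toLp_apply, Matrix.cons_val_zero,
    Matrix.cons_val_one, Matrix.head_cons, Real.norm_eq_abs, sq_abs]
  rw [h, Real.sqrt_one]

def pA : Pt := pt 0 0
def pB : Pt := pt 1 0
def pC : Pt := pt (1/2) (√3/2)

lemma sqrt3_sq : Real.sqrt 3 ^ 2 = 3 := Real.sq_sqrt (by norm_num)
lemma sqrt3_pos : (0:ℝ) < √3 := Real.sqrt_pos.mpr (by norm_num)

lemma hAB : pA ≠ pB := fun h => by
  have := congrArg (fun w : Pt => w 0) h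
  simp only [pA, pB, pt_apply0] at this; norm_num at this
lemma hAC : pA ≠ pC := fun h => by
  have := congrArg (fun w : Pt => w 1) h
  simp only [pA, pC, pt_apply1] at this
  linarith [sqrt3_pos]
lemma hBC : pB ≠ pC := fun h => by
  have := congrArg (fun w : Pt => w 0) h
  simp only [pB, pC, pt_apply0] at this; norm_num at this

lemma nBA : ‖pB - pA‖ = 1 := by
  rw [pB, pA, pt_sub]; exact pt_norm _ _ (by norm_num)
lemma nCA : ‖pC - pA‖ = 1 := by
  rw [pC, pA, pt_sub]; exact pt_norm _ _ (by nlinarith [sqrt3_sq])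
lemma nAB : ‖pA - pB‖ = 1 := by
  rw [pB, pA, pt_sub]; exact pt_norm _ _ (by norm_num)
lemma nCB : ‖pC - pB‖ = 1 := by
  rw [pC, pB, pt_sub]; exact pt_norm _ _ (by nlinarith [sqrt3_sq])
lemma nAC : ‖pA - pC‖ = 1 := by
  rw [pC, pA, pt_sub]; exact pt_norm _ _ (by nlinarith [sqrt3_sq])
lemma nBC : ‖pB - pC‖ = 1 := by
  rw [pC, pB, pt_sub]; exact pt_norm _ _ (by nlinarith [sqrt3_sq])

lemma iA : (inner ℝ (pB - pA) (pC - pA) : ℝ) = 1/2 := by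
  rw [pA, pB, pC, pt_sub, pt_sub, inner_pt]; norm_num
lemma iB : (inner ℝ (pA - pB) (pC - pB) : ℝ) = 1/2 := by
  rw [pA, pB, pC, pt_sub, pt_sub, inner_pt]; nlinarith [sqrt3_sq]
lemma iC : (inner ℝ (pA - pC) (pB - pC) : ℝ) = 1/2 := by
  rw [pA, pB, pC, pt_sub, pt_sub, inner_pt]; nlinarith [sqrt3_sq]

lemma not_collinear : ¬ Collinear ℝ ({pA, pB, pC} : Set Pt) := by
  intro h
  rw [collinear_iff_of_mem (Set.mem_insert pA _)] at h
  obtain ⟨v, hv⟩ := h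
  obtain ⟨tb, htb⟩ := hv pB (by simp)
  obtain ⟨tc, htc⟩ := hv pC (by simp)
  have hb1 : tb * v 1 = 0 := by
    have := congrArg (fun w : Pt => w 1) htb
    simpa [pB, pA, pt_apply1] using this.symm
  have hb0 : tb * v 0 = 1 := by
    have := congrArg (fun w : Pt => w 0) htb
    simpa [pB, pA, pt_apply0] using this.symm
  have hc1 : tc * v 1 = √3/2 := by
    have := congrArg (fun w : Pt => w 1) htc
    simpa [pC, pA, pt_apply1] using this.symm
  have htbne : tb ≠ 0 := fun h => by rw [h, zero_mul] at hb0; norm_num at hb0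
  have hv1 : v 1 = 0 := by
    rcases mul_eq_zero.mp hb1 with h | h
    · exact absurd h htbne
    · exact h
  rw [hv1, mul_zero] at hc1
  linarith [sqrt3_pos]

lemma finishLem {S : Finset Pt} (G : PSLG S) {p q r : Pt} (hp : p ∈ S)
    (hq : (p, q) ∈ G.E) (hr : (p, r) ∈ G.E)
    (h1 : ‖q - p‖ = 1) (h2 : ‖r - p‖ = 1) (h3 : (inner ℝ (q - p) (r - p) : ℝ) = 1/2)
    {ε : ℝ} (hε : 0 < ε) :
    ∃ p ∈ S, ∀ φ : ℝ, VertexOpen G p φ → φ ≤ 5 * Real.pi / 3 + ε := by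
  refine ⟨p, hp, fun φ hφ => ?_⟩
  by_contra hcon
  push_neg at hcon
  obtain ⟨d, hd, hang⟩ := hφ
  exact key_angle hd h1 h2 h3
    (lt_of_le_of_lt (hang q hq) (by linarith [Real.pi_pos]))
    (lt_of_le_of_lt (hang r hr) (by linarith [Real.pi_pos]))

end AuxProof

/-- For every `ε > 0` there is a finite point set in general position on which every
connected plane straight-line graph has a vertex whose maximum incident angle is at most
`5π/3 + ε`. -/



theorem stmt9 (ε : ℝ) (hε : 0 < ε) :
    ∃ S : Finset Pt, S.Nonempty ∧ GenPos S ∧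
      ∀ G : PSLG S, G.Connected →
        ∃ p ∈ S, ∀ φ : ℝ, VertexOpen G p φ → φ ≤ 5 * Real.pi / 3 + ε := by
  refine ⟨{pA, pB, pC}, ⟨pA, by simp⟩, ?_, ?_⟩
  · intro p hp q hq r hr hpq hpr hqr
    have hTsub : ({p, q, r} : Finset Pt) ⊆ {pA, pB, pC} := by
      intro x hx
      simp only [Finset.mem_insert, Finset.mem_singleton] at hx
      rcases hx with h | h | h <;> subst h <;> assumption
    have hTcard : ({p, q, r} : Finset Pt).card = 3 := by
      rw [Finset.card_insert_of_notMem (by simp [hpq, hpr]),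
        Finset.card_insert_of_notMem (by simp [hqr]), Finset.card_singleton]
    have hScard : ({pA, pB, pC} : Finset Pt).card = 3 := by
      rw [Finset.card_insert_of_notMem (by simp [hAB, hAC]),
        Finset.card_insert_of_notMem (by simp [hBC]), Finset.card_singleton]
    have hTS : ({p, q, r} : Finset Pt) = {pA, pB, pC} :=
      Finset.eq_of_subset_of_card_le hTsub (by rw [hTcard, hScard])
    have hset : ({p, q, r} : Set Pt) = ({pA, pB, pC} : Set Pt) := by
      have := congrArg (fun s : Finset Pt => (s : Set Pt)) hTS
      simpa using this
    rw [hset]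
    exact not_collinear
  · intro G hG
    have hA : pA ∈ ({pA, pB, pC} : Finset Pt) := by simp
    have hB : pB ∈ ({pA, pB, pC} : Finset Pt) := by simp
    have hC : pC ∈ ({pA, pB, pC} : Finset Pt) := by simp
    have nbr : ∀ x ∈ ({pA, pB, pC} : Finset Pt), ∀ y ∈ ({pA, pB, pC} : Finset Pt),
        x ≠ y → ∃ z, z ∈ ({pA, pB, pC} : Finset Pt) ∧ z ≠ x ∧ (x, z) ∈ G.E := by
      intro x hx y hy hxy
      rcases (hG x hx y hy).cases_head with h | ⟨z, hz, _⟩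
      · exact absurd h hxy
      · exact ⟨z, (G.endpts _ hz).2, (G.ne _ hz).symm, hz⟩
    obtain ⟨x1, hx1S, hx1ne, hx1⟩ := nbr pA hA pB hB hAB
    simp only [Finset.mem_insert, Finset.mem_singleton] at hx1S
    rcases hx1S with rfl | rfl | rfl
    · exact absurd rfl hx1ne
    · -- edge pA-pB exists
      have eBA : (pB, pA) ∈ G.E := G.symm _ hx1
      obtain ⟨x3, hx3S, hx3ne, hx3⟩ := nbr pC hC pA hA hAC.symm
      simp only [Finset.mem_insert, Finset.mem_singleton] at hx3S
      rcases hx3S with rfl | rfl | rfl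
      · -- edge pC-pA: vertex pA has nbrs pB, pC
        have eAC : (pA, pC) ∈ G.E := G.symm _ hx3
        exact finishLem G hA hx1 eAC nBA nCA iA hε
      · -- edge pC-pB: vertex pB has nbrs pA, pC
        have eBC : (pB, pC) ∈ G.E := G.symm _ hx3
        exact finishLem G hB eBA eBC nAB nCB iB hε
      · exact absurd rfl hx3ne
    · -- edge pA-pC exists
      have eCA : (pC, pA) ∈ G.E := G.symm _ hx1
      obtain ⟨x2, hx2S, hx2ne, hx2⟩ := nbr pB hB pA hA hAB.symm
      simp only [Finset.mem_insert, Finset.mem_singleton] at hx2S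
      rcases hx2S with rfl | rfl | rfl
      · -- edge pB-pA: vertex pA has nbrs pB, pC
        have eAB : (pA, pB) ∈ G.E := G.symm _ hx2
        exact finishLem G hA eAB hx1 nBA nCA iA hε
      · exact absurd rfl hx2ne
      · -- edge pB-pC: vertex pC has nbrs pA, pB
        have eCB : (pC, pB) ∈ G.E := G.symm _ hx2
        exact finishLem G hC eCA eCB nAC nBC iC hε
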